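/- Pathwise differentiability of the g-functional δ_e with the Robins–Hahn influence function: for every differentiable one-parameter family (p_t) of strictly positive joint pmfs on 𝒴×𝒮×{0,1}×𝒳 with p_0 the true pmf of O = (Y,M,E,X), and each e ∈ {0,1}, the map t ↦ δ_e(t) := Σ_x E_t(Y|E=e,X=x)·f_t(x) is differentiable at t = 0 and dδ_e(t)/dt|_{t=0} = E[ S_e · U ], where S_e := [1{E=e}/P(E=e|X)]·(Y − a_e(X)) + a_e(X) − δ_e, a_e(x) := E(Y|E=e,X=x), δ_e := Σ_x a_e(x)·P(X=x), and U := (d/dt) log p_t(O)|_{t=0} is the score. -/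

import Mathlib

open scoped BigOperators

/-- The sample space of the observed data `O = (Y, M, E, X)`, where `Y` takes values in a
finite set `𝒴` of reals (encoded by a finite type `𝒴` with a value map), `M` in a finite
set `𝒮`, `E` in `{0,1}` (encoded as `Bool`) and `X` in a finite set `𝒳`. -/
abbrev Obs (𝒴 𝒮 𝒳 : Type*) := 𝒴 × 𝒮 × Bool × 𝒳

noncomputable section

variable {𝒴 𝒮 𝒳 : Type*} [Fintype 𝒴] [Fintype 𝒮] [Fintype 𝒳]

/-- Marginal pmf of `X`: `f(x) = Σ_{y,m,e} p(y,m,e,x)`. -/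
def margX (p : Obs 𝒴 𝒮 𝒳 → ℝ) (x : 𝒳) : ℝ :=
  ∑ y : 𝒴, ∑ m : 𝒮, ∑ e : Bool, p (y, m, e, x)

/-- Joint pmf of `(E, X)`. -/
def jointEX (p : Obs 𝒴 𝒮 𝒳 → ℝ) (e : Bool) (x : 𝒳) : ℝ :=
  ∑ y : 𝒴, ∑ m : 𝒮, p (y, m, e, x)

/-- Joint pmf of `(M, E, X)`. -/
def jointMEX (p : Obs 𝒴 𝒮 𝒳 → ℝ) (m : 𝒮) (e : Bool) (x : 𝒳) : ℝ :=
  ∑ y : 𝒴, p (y, m, e, x)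

/-- Conditional pmf `P(E=e | X=x)` computed under `p`, as a ratio of sums. -/
def fE (p : Obs 𝒴 𝒮 𝒳 → ℝ) (e : Bool) (x : 𝒳) : ℝ :=
  jointEX p e x / margX p x

/-- Conditional pmf `P(M=m | E=e, X=x)` computed under `p`, as a ratio of sums. -/
def fM (p : Obs 𝒴 𝒮 𝒳 → ℝ) (m : 𝒮) (e : Bool) (x : 𝒳) : ℝ :=
  jointMEX p m e x / jointEX p e x

/-- Outcome regression `b(m,x) = E(Y | E=1, M=m, X=x)` computed under `p`, where
`val : 𝒴 → ℝ` gives the real values of the outcome. -/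
def bFun (val : 𝒴 → ℝ) (p : Obs 𝒴 𝒮 𝒳 → ℝ) (m : 𝒮) (x : 𝒳) : ℝ :=
  (∑ y : 𝒴, val y * p (y, m, true, x)) / jointMEX p m true x

/-- `η(x) = Σ_m b(m,x)·P(M=m | E=0, X=x)` computed under `p`. -/
def etaFun (val : 𝒴 → ℝ) (p : Obs 𝒴 𝒮 𝒳 → ℝ) (x : 𝒳) : ℝ :=
  ∑ m : 𝒮, bFun val p m x * fM p m false x

/-- The mediation functional
`θ(p) = Σ_{m,x} E_p(Y|E=1,M=m,X=x)·f_p(m|E=0,X=x)·f_p(x)` computed under the pmf `p`. -/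
def thetaP (val : 𝒴 → ℝ) (p : Obs 𝒴 𝒮 𝒳 → ℝ) : ℝ :=
  ∑ x : 𝒳, etaFun val p x * margX p x

/-- The efficient influence function `S` of the mediation functional:
`S := 1{E=1}·[P(M=M|E=0,X)/(P(E=1|X)·P(M=M|E=1,X))]·(Y − b(M,X))
  + [1{E=0}/P(E=0|X)]·(b(M,X) − η(X)) + η(X) − θ0`. -/
def effIF (val : 𝒴 → ℝ) (p : Obs 𝒴 𝒮 𝒳 → ℝ) : Obs 𝒴 𝒮 𝒳 → ℝ :=
  fun o =>
    (if o.2.2.1 then (1:ℝ) else 0) *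
        (fM p o.2.1 false o.2.2.2 / (fE p true o.2.2.2 * fM p o.2.1 true o.2.2.2)) *
        (val o.1 - bFun val p o.2.1 o.2.2.2) +
      (if o.2.2.1 then (0:ℝ) else 1) / fE p false o.2.2.2 *
        (bFun val p o.2.1 o.2.2.2 - etaFun val p o.2.2.2) +
      etaFun val p o.2.2.2 - thetaP val p

end

noncomputable section

variable {𝒴 𝒮 𝒳 : Type*} [Fintype 𝒴] [Fintype 𝒮] [Fintype 𝒳]

/-- Outcome regression on the exposure and confounders only:
`a_e(x) = E(Y | E=e, X=x)` computed under `p`. -/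
def aFun (val : 𝒴 → ℝ) (p : Obs 𝒴 𝒮 𝒳 → ℝ) (e : Bool) (x : 𝒳) : ℝ :=
  (∑ y : 𝒴, ∑ m : 𝒮, val y * p (y, m, e, x)) / jointEX p e x

/-- The g-functional `δ_e(p) = Σ_x E_p(Y|E=e,X=x)·f_p(x)`. -/
def deltaP (val : 𝒴 → ℝ) (p : Obs 𝒴 𝒮 𝒳 → ℝ) (e : Bool) : ℝ :=
  ∑ x : 𝒳, aFun val p e x * margX p x

/-- The Robins–Hahn influence function
`S_e := [1{E=e}/P(E=e|X)]·(Y − a_e(X)) + a_e(X) − δ_e`. -/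
def deltaIF (val : 𝒴 → ℝ) (p : Obs 𝒴 𝒮 𝒳 → ℝ) (e : Bool) : Obs 𝒴 𝒮 𝒳 → ℝ :=
  fun o =>
    (if o.2.2.1 = e then (1:ℝ) else 0) / fE p e o.2.2.2 * (val o.1 - aFun val p e o.2.2.2) +
      aFun val p e o.2.2.2 - deltaP val p e

end

/-- pathwise differentiability of the g-functional `δ_e` with the
Robins–Hahn influence function: for every differentiable one-parameter family `(p_t)` of
strictly positive pmfs with `p_0 = p` and each `e ∈ {0,1}`, `t ↦ δ_e(p_t)` is
differentiable at `0` with derivative `E[S_e·U]`, `U` the score. -/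
private lemma sum_reorder4 {𝒴 𝒮 𝒳 : Type*} [Fintype 𝒴] [Fintype 𝒮] [Fintype 𝒳]
    (g : 𝒴 → 𝒮 → Bool → 𝒳 → ℝ) :
    ∑ y : 𝒴, ∑ m : 𝒮, ∑ e : Bool, ∑ x : 𝒳, g y m e x
      = ∑ x : 𝒳, ∑ y : 𝒴, ∑ m : 𝒮, ∑ e : Bool, g y m e x := by
  trans ∑ y : 𝒴, ∑ m : 𝒮, ∑ x : 𝒳, ∑ e : Bool, g y m e x
  · exact Finset.sum_congr rfl fun y _ => Finset.sum_congr rfl fun m _ => Finset.sum_comm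
  trans ∑ y : 𝒴, ∑ x : 𝒳, ∑ m : 𝒮, ∑ e : Bool, g y m e x
  · exact Finset.sum_congr rfl fun y _ => Finset.sum_comm
  exact Finset.sum_comm

private lemma perX {𝒴 𝒮 : Type*} [Fintype 𝒴] [Fintype 𝒮] (val : 𝒴 → ℝ) (e : Bool)
    (d : 𝒴 → 𝒮 → Bool → ℝ) (Nx Dx Fx : ℝ) (hD : Dx ≠ 0) (hF : Fx ≠ 0) :
    ((∑ y : 𝒴, ∑ m : 𝒮, val y * d y m e) * Dx - Nx * (∑ y : 𝒴, ∑ m : 𝒮, d y m e)) / Dx ^ 2 * Fx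
        + Nx / Dx * (∑ y : 𝒴, ∑ m : 𝒮, ∑ e' : Bool, d y m e')
      = ∑ y : 𝒴, ∑ m : 𝒮, ∑ e' : Bool,
          ((if e' = e then (1:ℝ) else 0) / (Dx / Fx) * (val y - Nx / Dx) + Nx / Dx) * d y m e' := by
  have step : ∀ y m, (Fx / Dx * (val y * d y m e) - Nx * Fx / Dx ^ 2 * d y m e)
        + ∑ e' : Bool, Nx / Dx * d y m e'
      = ∑ e' : Bool,
          ((if e' = e then (1:ℝ) else 0) / (Dx / Fx) * (val y - Nx / Dx) + Nx / Dx) * d y m e' := by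
    intro y m
    rw [eq_comm]
    simp only [add_mul, Finset.sum_add_distrib, ite_div, ite_mul, zero_div, zero_mul,
      Fintype.sum_ite_eq']
    congr 1
    field_simp
  calc
    ((∑ y : 𝒴, ∑ m : 𝒮, val y * d y m e) * Dx - Nx * (∑ y : 𝒴, ∑ m : 𝒮, d y m e)) / Dx ^ 2 * Fx
        + Nx / Dx * (∑ y : 𝒴, ∑ m : 𝒮, ∑ e' : Bool, d y m e')
      = (Fx / Dx * (∑ y : 𝒴, ∑ m : 𝒮, val y * d y m e)
          - Nx * Fx / Dx ^ 2 * (∑ y : 𝒴, ∑ m : 𝒮, d y m e))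
          + Nx / Dx * (∑ y : 𝒴, ∑ m : 𝒮, ∑ e' : Bool, d y m e') := by
        field_simp
    _ = ∑ y : 𝒴, ∑ m : 𝒮, ((Fx / Dx * (val y * d y m e) - Nx * Fx / Dx ^ 2 * d y m e)
          + ∑ e' : Bool, Nx / Dx * d y m e') := by
        simp only [Finset.mul_sum, ← Finset.sum_sub_distrib, ← Finset.sum_add_distrib]
    _ = _ := Finset.sum_congr rfl fun y _ => Finset.sum_congr rfl fun m _ => step y m


theorem g_functional_pathwise_differentiability
    {𝒴 𝒮 𝒳 : Type*} [Fintype 𝒴] [Fintype 𝒮] [Fintype 𝒳] (val : 𝒴 → ℝ)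
    (p : Obs 𝒴 𝒮 𝒳 → ℝ)
    (hpos : ∀ o, 0 < p o) (hsum : ∑ o : Obs 𝒴 𝒮 𝒳, p o = 1)
    (ε : ℝ) (hε : 0 < ε) (pt : ℝ → Obs 𝒴 𝒮 𝒳 → ℝ)
    (hpt0 : pt 0 = p)
    (hptpos : ∀ t, |t| < ε → ∀ o, 0 < pt t o)
    (hptsum : ∀ t, |t| < ε → ∑ o : Obs 𝒴 𝒮 𝒳, pt t o = 1)
    (hdiff : ∀ o, DifferentiableAt ℝ (fun t => pt t o) 0) :
    ∀ e : Bool,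
      HasDerivAt (fun t => deltaP val (pt t) e)
        (∑ o : Obs 𝒴 𝒮 𝒳, p o * (deltaIF val p e o * deriv (fun t => Real.log (pt t o)) 0))
        0 := by
  intro e
  -- nonemptiness
  have hne : Nonempty (Obs 𝒴 𝒮 𝒳) := by
    by_contra h
    rw [not_nonempty_iff] at h
    rw [Finset.univ_eq_empty, Finset.sum_empty] at hsum
    exact zero_ne_one hsum
  obtain ⟨⟨y0, m0, e0, x0⟩⟩ := hne
  haveI : Nonempty 𝒴 := ⟨y0⟩
  haveI : Nonempty 𝒮 := ⟨m0⟩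
  haveI : Nonempty 𝒳 := ⟨x0⟩
  set d : Obs 𝒴 𝒮 𝒳 → ℝ := fun o => deriv (fun t => pt t o) 0 with hddef
  have hd : ∀ o : Obs 𝒴 𝒮 𝒳, HasDerivAt (fun t => pt t o) (d o) 0 :=
    fun o => (hdiff o).hasDerivAt
  have hp0 : ∀ o, pt 0 o = p o := fun o => by rw [hpt0]
  have hlog : ∀ o : Obs 𝒴 𝒮 𝒳, deriv (fun t => Real.log (pt t o)) 0 = d o / p o := by
    intro o
    have h := (hd o).log (by rw [hp0 o]; exact (hpos o).ne')
    rw [hp0 o] at h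
    exact h.deriv
  have hdsum : ∑ o : Obs 𝒴 𝒮 𝒳, d o = 0 := by
    have h1 : HasDerivAt (fun t => ∑ o : Obs 𝒴 𝒮 𝒳, pt t o) (∑ o : Obs 𝒴 𝒮 𝒳, d o) 0 :=
      HasDerivAt.fun_sum fun o _ => hd o
    have h2 : (fun t => ∑ o : Obs 𝒴 𝒮 𝒳, pt t o) =ᶠ[nhds (0:ℝ)] fun _ => (1:ℝ) := by
      filter_upwards [Metric.ball_mem_nhds (0:ℝ) hε] with t ht
      exact hptsum t (by simpa [Real.dist_eq] using ht)
    have h3 := h1.congr_of_eventuallyEq h2.symm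
    exact h3.unique (hasDerivAt_const 0 1)
  have hDpos : ∀ x, 0 < jointEX p e x := fun x =>
    Finset.sum_pos (fun y _ => Finset.sum_pos (fun m _ => hpos _) Finset.univ_nonempty)
      Finset.univ_nonempty
  have hFpos : ∀ x, 0 < margX p x := fun x =>
    Finset.sum_pos (fun y _ => Finset.sum_pos (fun m _ =>
      Finset.sum_pos (fun e' _ => hpos _) Finset.univ_nonempty) Finset.univ_nonempty)
      Finset.univ_nonempty
  have hN : ∀ x, HasDerivAt (fun t => ∑ y : 𝒴, ∑ m : 𝒮, val y * pt t (y, m, e, x))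
      (∑ y : 𝒴, ∑ m : 𝒮, val y * d (y, m, e, x)) 0 := fun x =>
    HasDerivAt.fun_sum fun y _ => HasDerivAt.fun_sum fun m _ => (hd _).const_mul (val y)
  have hD : ∀ x, HasDerivAt (fun t => jointEX (pt t) e x)
      (∑ y : 𝒴, ∑ m : 𝒮, d (y, m, e, x)) 0 := fun x => by
    simp only [jointEX]
    exact HasDerivAt.fun_sum fun y _ => HasDerivAt.fun_sum fun m _ => hd _
  have hF : ∀ x, HasDerivAt (fun t => margX (pt t) x)
      (∑ y : 𝒴, ∑ m : 𝒮, ∑ e' : Bool, d (y, m, e', x)) 0 := fun x => by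
    simp only [margX]
    exact HasDerivAt.fun_sum fun y _ => HasDerivAt.fun_sum fun m _ => HasDerivAt.fun_sum fun e' _ => hd _
  have hmain : HasDerivAt (fun t => deltaP val (pt t) e)
      (∑ x : 𝒳, (((∑ y : 𝒴, ∑ m : 𝒮, val y * d (y, m, e, x)) * jointEX p e x
          - (∑ y : 𝒴, ∑ m : 𝒮, val y * p (y, m, e, x)) * (∑ y : 𝒴, ∑ m : 𝒮, d (y, m, e, x)))
            / (jointEX p e x) ^ 2 * margX p x
        + (∑ y : 𝒴, ∑ m : 𝒮, val y * p (y, m, e, x)) / jointEX p e x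
            * (∑ y : 𝒴, ∑ m : 𝒮, ∑ e' : Bool, d (y, m, e', x)))) 0 := by
    simp only [deltaP, aFun]
    refine HasDerivAt.fun_sum fun x _ => ?_
    have h1 := ((hN x).fun_div (hD x) (by simp only [hpt0]; exact (hDpos x).ne')).fun_mul (hF x)
    simp only [hpt0] at h1
    exact h1
  have hval : (∑ o : Obs 𝒴 𝒮 𝒳, p o * (deltaIF val p e o * deriv (fun t => Real.log (pt t o)) 0))
      = ∑ x : 𝒳, (((∑ y : 𝒴, ∑ m : 𝒮, val y * d (y, m, e, x)) * jointEX p e x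
          - (∑ y : 𝒴, ∑ m : 𝒮, val y * p (y, m, e, x)) * (∑ y : 𝒴, ∑ m : 𝒮, d (y, m, e, x)))
            / (jointEX p e x) ^ 2 * margX p x
        + (∑ y : 𝒴, ∑ m : 𝒮, val y * p (y, m, e, x)) / jointEX p e x
            * (∑ y : 𝒴, ∑ m : 𝒮, ∑ e' : Bool, d (y, m, e', x))) := by
    simp only [hlog]
    have step1 : ∀ o : Obs 𝒴 𝒮 𝒳, p o * (deltaIF val p e o * (d o / p o))
        = deltaIF val p e o * d o := by
      intro o
      field_simp [(hpos o).ne']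
    rw [Finset.sum_congr rfl fun o _ => step1 o]
    simp only [deltaIF, fE, aFun, sub_mul, Finset.sum_sub_distrib]
    rw [← Finset.mul_sum, hdsum, mul_zero, sub_zero]
    simp only [Fintype.sum_prod_type]
    rw [sum_reorder4]
    refine Finset.sum_congr rfl fun x _ => ?_
    exact (perX val e (fun y m e' => d (y, m, e', x))
      (∑ y : 𝒴, ∑ m : 𝒮, val y * p (y, m, e, x)) (jointEX p e x) (margX p x)
      (hDpos x).ne' (hFpos x).ne').symm
  rw [hval]
  exact hmain
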